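/- A word w over an alphabet is 2-minimal (contains Z_2 but no proper contiguous subword of w contains Z_2) if and only if either w = [a,a,a] for some letter a, or w = [a] ++ b_1^{j_1} ++ ... ++ b_r^{j_r} ++ [a] where r ≥ 1, the letters a, b_1, ..., b_r are pairwise distinct, and each j_i ∈ {1, 2} (b^j denotes j repetitions of b). -/

import Mathlib

/-- A word contains `Z₂` if it has an infix `v ++ u ++ v` with `u, v` nonempty. -/
def ContainsZ2 {α : Type*} (w : List α) : Prop :=
  ∃ u v : List α, u ≠ [] ∧ v ≠ [] ∧ (v ++ u ++ v) <:+: w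

namespace Z2aux

variable {α : Type*}

lemma mono {x y : List α} (h : x <:+: y) (hx : ContainsZ2 x) : ContainsZ2 y := by
  obtain ⟨u, v, hu, hv, hinf⟩ := hx
  exact ⟨u, v, hu, hv, hinf.trans h⟩

lemma pattern_iff {w : List α} :
    ContainsZ2 w ↔ ∃ (a : α) (m : List α), m ≠ [] ∧ ([a] ++ m ++ [a]) <:+: w := by
  constructor
  · rintro ⟨u, v, hu, hv, hinf⟩
    obtain ⟨a, v', rfl⟩ := List.exists_cons_of_ne_nil hv
    refine ⟨a, v' ++ u, by simp [hu], ?_⟩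
    refine List.IsPrefix.isInfix ?_ |>.trans hinf
    exact ⟨v', by simp⟩
  · rintro ⟨a, m, hm, hinf⟩
    exact ⟨m, [a], hm, by simp, hinf⟩

lemma length_ge {v : List α} (h : ContainsZ2 v) : 3 ≤ v.length := by
  obtain ⟨u, vv, hu, hv, hinf⟩ := h
  have hle := hinf.length_le
  have h1 : 0 < u.length := List.length_pos_iff.mpr hu
  have h2 : 0 < vv.length := List.length_pos_iff.mpr hv
  simp only [List.length_append] at hle
  omega

lemma cons_iff {b : α} {t : List α} :
    ContainsZ2 (b :: t) ↔ b ∈ t.tail ∨ ContainsZ2 t := by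
  constructor
  · intro h
    rw [pattern_iff] at h
    obtain ⟨a, m, hm, hinf⟩ := h
    rcases List.infix_cons_iff.mp hinf with hpre | hinf'
    · left
      rw [show [a] ++ m ++ [a] = a :: (m ++ [a]) from rfl] at hpre
      obtain ⟨hab, hpre'⟩ := List.cons_prefix_cons.mp hpre
      obtain ⟨r, hr⟩ := hpre'
      obtain ⟨c, m', rfl⟩ := List.exists_cons_of_ne_nil hm
      subst hab
      rw [← hr]
      simp
    · right; exact pattern_iff.mpr ⟨a, m, hm, hinf'⟩
  · rintro (h | h)
    · have ht : t ≠ [] := by rintro rfl; simp at h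
      obtain ⟨c, t', rfl⟩ := List.exists_cons_of_ne_nil ht
      simp only [List.tail_cons] at h
      obtain ⟨s, r, rfl⟩ := List.append_of_mem h
      rw [pattern_iff]
      exact ⟨b, c :: s, by simp, ⟨[], r, by simp⟩⟩
    · exact mono (List.suffix_cons b t).isInfix h

lemma reverse_mono {l : List α} (h : ContainsZ2 l) : ContainsZ2 l.reverse := by
  obtain ⟨u, v, hu, hv, hinf⟩ := h
  refine ⟨u.reverse, v.reverse, by simp [hu], by simp [hv], ?_⟩
  have h2 : (v ++ u ++ v).reverse <:+: l.reverse := List.reverse_infix.mpr hinf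
  simpa [List.reverse_append, List.append_assoc] using h2

lemma mem_flat_iff {p : List (α × ℕ)} (hp : ∀ x ∈ p, x.2 = 1 ∨ x.2 = 2) {c : α} :
    c ∈ p.flatMap (fun x => List.replicate x.2 x.1) ↔ c ∈ p.map Prod.fst := by
  simp only [List.mem_flatMap, List.mem_map]
  constructor
  · rintro ⟨x, hx, hc⟩
    exact ⟨x, hx, (List.eq_of_mem_replicate hc).symm⟩
  · rintro ⟨x, hx, rfl⟩
    refine ⟨x, hx, List.mem_replicate.mpr ⟨?_, rfl⟩⟩
    rcases hp x hx with h | h <;> omega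

lemma free_of_blocks : ∀ (p : List (α × ℕ)), (p.map Prod.fst).Nodup →
    (∀ x ∈ p, x.2 = 1 ∨ x.2 = 2) →
    ¬ ContainsZ2 (p.flatMap (fun x => List.replicate x.2 x.1))
  | [], _, _ => by intro h; have := length_ge h; simp at this
  | (b, j) :: p', hnd, hcnt => by
      rw [List.map_cons, List.nodup_cons] at hnd
      obtain ⟨hb, hnd'⟩ := hnd
      have hcnt' : ∀ x ∈ p', x.2 = 1 ∨ x.2 = 2 := fun x hx => hcnt x (by simp [hx])
      have ihp := free_of_blocks p' hnd' hcnt'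
      have hbmem : b ∉ p'.flatMap (fun x => List.replicate x.2 x.1) :=
        fun h => hb ((mem_flat_iff hcnt').mp h)
      have hfree1 : ¬ ContainsZ2 (b :: p'.flatMap (fun x => List.replicate x.2 x.1)) := by
        rw [cons_iff]
        rintro (h | h)
        · exact hbmem (List.mem_of_mem_tail h)
        · exact ihp h
      rcases hcnt (b, j) (by simp) with hj | hj <;> subst hj
      · simpa using hfree1
      · have heq : ((b, 2) :: p').flatMap (fun x : α × ℕ => List.replicate x.2 x.1)
            = b :: b :: p'.flatMap (fun x => List.replicate x.2 x.1) := by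
          simp [List.replicate]
        rw [heq, cons_iff]
        rintro (h | h)
        · exact hbmem (by simpa using h)
        · exact hfree1 h

lemma blocks_of_free : ∀ (n : ℕ) (m : List α), m.length ≤ n → ¬ ContainsZ2 m →
    ∃ p : List (α × ℕ), (p.map Prod.fst).Nodup ∧ (∀ x ∈ p, x.2 = 1 ∨ x.2 = 2) ∧
      m = p.flatMap (fun x => List.replicate x.2 x.1)
  | _, [], _, _ => ⟨[], by simp, by simp, by simp⟩
  | 0, b :: t, hlen, _ => absurd hlen (by simp)
  | Nat.succ n, b :: t, hlen, hfree => by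
      rw [cons_iff] at hfree
      push_neg at hfree
      obtain ⟨h1, h2⟩ := hfree
      by_cases hbt : b ∈ t
      · have ht : t ≠ [] := by rintro rfl; simp at hbt
        obtain ⟨c, t', rfl⟩ := List.exists_cons_of_ne_nil ht
        have hcb : c = b := by
          rcases List.mem_cons.mp hbt with h | h
          · exact h.symm
          · exact absurd h (by simpa using h1)
        subst hcb
        have h1' : c ∉ t' := by simpa using h1
        rw [cons_iff] at h2
        push_neg at h2
        obtain ⟨h21, h22⟩ := h2
        obtain ⟨p', hnd, hcnt, hflat⟩ := blocks_of_free n t'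
          (by simp only [List.length_cons] at hlen ⊢; omega) h22
        refine ⟨(c, 2) :: p', ?_, ?_, ?_⟩
        · rw [List.map_cons, List.nodup_cons]
          refine ⟨fun h => h1' ?_, hnd⟩
          rw [hflat]
          exact (mem_flat_iff hcnt).mpr h
        · intro x hx
          rcases List.mem_cons.mp hx with rfl | hx
          · right; rfl
          · exact hcnt x hx
        · simp [← hflat, List.replicate]
      · obtain ⟨p', hnd, hcnt, hflat⟩ := blocks_of_free n t
          (by simp only [List.length_cons] at hlen; omega) h2
        refine ⟨(b, 1) :: p', ?_, ?_, ?_⟩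
        · rw [List.map_cons, List.nodup_cons]
          refine ⟨fun h => hbt ?_, hnd⟩
          rw [hflat]
          exact (mem_flat_iff hcnt).mpr h
        · intro x hx
          rcases List.mem_cons.mp hx with rfl | hx
          · left; rfl
          · exact hcnt x hx
        · simp [← hflat]

lemma proper_infix {v w : List α} (h : v <:+: w) (hne : v ≠ w) :
    v <:+: w.tail ∨ v <:+: w.dropLast := by
  obtain ⟨s, t, rfl⟩ := h
  rcases s with _ | ⟨c, s⟩
  · have ht : t ≠ [] := by rintro rfl; simp at hne
    right
    rw [List.nil_append, List.dropLast_append_of_ne_nil ht]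
    exact ⟨[], t.dropLast, by simp⟩
  · left
    simp only [List.cons_append, List.tail_cons]
    exact ⟨s, t, by simp⟩

end Z2aux

/-- `w` is 2-minimal: it contains `Z₂` but no infix other than `w` itself
contains `Z₂`. -/


def TwoMinimal {α : Type*} (w : List α) : Prop :=
  ContainsZ2 w ∧ ∀ v : List α, v <:+: w → v ≠ w → ¬ ContainsZ2 v

/-- Characterisation of 2-minimal words: `w` is 2-minimal iff `w = aaa` for some
letter `a`, or `w = a b₁^{j₁} ⋯ b_r^{j_r} a` with `r ≥ 1`, the letters
`a, b₁, …, b_r` pairwise distinct and each `jᵢ ∈ {1,2}`. -/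
theorem twoMinimal_iff {α : Type*} (w : List α) :
    TwoMinimal w ↔
      (∃ a : α, w = [a, a, a]) ∨
      (∃ (a : α) (p : List (α × ℕ)), p ≠ [] ∧
        (a :: p.map Prod.fst).Nodup ∧
        (∀ x ∈ p, x.2 = 1 ∨ x.2 = 2) ∧
        w = [a] ++ p.flatMap (fun x => List.replicate x.2 x.1) ++ [a]) := by
  constructor
  · rintro ⟨hz, hmin⟩
    obtain ⟨a, m, hm, hinf⟩ := Z2aux.pattern_iff.mp hz
    have hw : [a] ++ m ++ [a] = w := by
      by_contra hne
      exact hmin _ hinf hne (Z2aux.pattern_iff.mpr ⟨a, m, hm, List.infix_refl _⟩)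
    have hlen : w.length = m.length + 2 := by rw [← hw]; simp
    have hfree1 : ¬ ContainsZ2 (a :: m) := by
      apply hmin
      · rw [← hw]; exact ⟨[], [a], by simp⟩
      · intro he; apply_fun List.length at he; simp [hlen] at he
    have hfree2 : ¬ ContainsZ2 (m ++ [a]) := by
      apply hmin
      · rw [← hw]; exact ⟨[a], [], by simp⟩
      · intro he; apply_fun List.length at he; simp [hlen] at he
    rw [Z2aux.cons_iff] at hfree1
    push_neg at hfree1
    obtain ⟨hat, hfm⟩ := hfree1
    by_cases ham : a ∈ m
    · left
      obtain ⟨c, m', rfl⟩ := List.exists_cons_of_ne_nil hm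
      have hca : c = a := by
        rcases List.mem_cons.mp ham with h | h
        · exact h.symm
        · exact absurd h (by simpa using hat)
      subst hca
      have hm' : m' = [] := by
        by_contra hne
        apply hfree2
        rw [List.cons_append, Z2aux.cons_iff]
        left
        obtain ⟨d, m'', rfl⟩ := List.exists_cons_of_ne_nil hne
        simp
      subst hm'
      exact ⟨c, by rw [← hw]; rfl⟩
    · right
      obtain ⟨p, hnd, hcnt, hflat⟩ := Z2aux.blocks_of_free m.length m le_rfl hfm
      refine ⟨a, p, ?_, ?_, hcnt, by rw [← hw, hflat]⟩
      · rintro rfl; rw [List.flatMap_nil] at hflat; exact hm hflat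
      · rw [List.nodup_cons]
        refine ⟨fun h => ham ?_, hnd⟩
        rw [hflat]
        exact (Z2aux.mem_flat_iff hcnt).mpr h
  · rintro (⟨a, rfl⟩ | ⟨a, p, hp, hnd, hcnt, rfl⟩)
    · constructor
      · exact ⟨[a], [a], by simp, by simp, by simp⟩
      · intro v hv hne hz
        have h3 := Z2aux.length_ge hz
        have hle := hv.length_le
        simp only [List.length_cons, List.length_nil] at hle
        exact hne (hv.sublist.eq_of_length (by simp only [List.length_cons, List.length_nil]; omega))
    · set m := p.flatMap (fun x => List.replicate x.2 x.1) with hmdef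
      have hmne : m ≠ [] := by
        obtain ⟨x, p', rfl⟩ := List.exists_cons_of_ne_nil hp
        rcases hcnt x (by simp) with h | h <;>
          simp [hmdef, List.replicate, h]
      rw [List.nodup_cons] at hnd
      obtain ⟨haf, hnd'⟩ := hnd
      have ham : a ∉ m := fun h => haf ((Z2aux.mem_flat_iff hcnt).mp h)
      have hfm : ¬ ContainsZ2 m := Z2aux.free_of_blocks p hnd' hcnt
      have hfree1 : ¬ ContainsZ2 (a :: m) := by
        rw [Z2aux.cons_iff]
        rintro (h | h)
        · exact ham (List.mem_of_mem_tail h)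
        · exact hfm h
      have hfree2 : ¬ ContainsZ2 (m ++ [a]) := by
        intro h
        have hr := Z2aux.reverse_mono h
        rw [List.reverse_append] at hr
        have hfr : ¬ ContainsZ2 (a :: m.reverse) := by
          rw [Z2aux.cons_iff]
          rintro (h' | h')
          · exact ham (by simpa using List.mem_of_mem_tail h')
          · exact hfm (by simpa using Z2aux.reverse_mono h')
        exact hfr (by simpa using hr)
      constructor
      · exact ⟨m, [a], hmne, by simp, List.infix_refl _⟩
      · intro v hv hne hz
        have ht : ([a] ++ m ++ [a]).tail = m ++ [a] := by simp
        have hd : ([a] ++ m ++ [a]).dropLast = [a] ++ m := by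
          rw [show [a] ++ m ++ [a] = ([a] ++ m) ++ [a] by simp, List.dropLast_concat]
        rcases Z2aux.proper_infix hv hne with h | h
        · rw [ht] at h
          exact hfree2 (Z2aux.mono h hz)
        · rw [hd] at h
          exact hfree1 (Z2aux.mono h hz)
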